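/- If V is a local integral basis of A at infinity, then V is suitable at infinity: for a ∈ K[x] and B ∈ K[x]^{n×n} with aV′ = BV one has deg_x(B) < deg_x(a). -/

import Mathlib

noncomputable section
open scoped Classical

open Polynomial

/-- Termwise derivative (w.r.t. `x`) of a generalized (Hahn/Puiseux) series in `x - a`:
the exponent-`q` coefficient of `P'` is `(q+1)` times the exponent-`(q+1)` coefficient of `P`. -/
def hderiv {F : Type} [Field F] (P : HahnSeries ℚ F) : HahnSeries ℚ F where
  coeff q := ((q + 1 : ℚ) : F) * P.coeff (q + 1)
  isPWO_support' := by
    have hsub : (Function.support fun q : ℚ => ((q + 1 : ℚ) : F) * P.coeff (q + 1))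
        ⊆ (fun q : ℚ => q - 1) '' P.support := by
      intro q hq
      refine ⟨q + 1, ?_, by ring⟩
      intro h0
      simp [Function.mem_support, h0] at hq
    exact (P.isPWO_support.image_of_monotoneOn
      (fun x _ y _ hxy => by simpa using hxy)).mono hsub

/-- The valuation of a generalized (Hahn/Puiseux) series: the least exponent occurring,
and `⊤` for the zero series. -/
def hval {F : Type} [Field F] (P : HahnSeries ℚ F) : WithTop ℚ :=
  if h : P = 0 then ⊤
  else ((P.isWF_support.min (HahnSeries.support_nonempty_iff.mpr h) : ℚ) : WithTop ℚ)

/-- A series is ramified if some exponent in its support is not an integer. -/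
def Ramified {F : Type} [Field F] (P : HahnSeries ℚ F) : Prop :=
  ∃ q ∈ P.support, ∀ z : ℤ, (z : ℚ) ≠ q

/-- The set of fractional (non-integer) exponents occurring in a series. -/
def fracSupport {F : Type} [Field F] (P : HahnSeries ℚ F) : Set ℚ :=
  {q | q ∈ P.support ∧ ∀ z : ℤ, (z : ℚ) ≠ q}

/-- The minimal fractional exponent `δ(P)` of a series; `⊤` if `P` is not ramified. -/
def delta {F : Type} [Field F] (P : HahnSeries ℚ F) : WithTop ℚ :=
  if h : (fracSupport P).Nonempty then
    (((P.isWF_support.mono (fun q hq => hq.1)).min h : ℚ) : WithTop ℚ)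
  else ⊤

/-- A Hahn series over `ℚ` is a Puiseux series if its exponents have a common denominator. -/
def IsPuiseux {F : Type} [Field F] (P : HahnSeries ℚ F) : Prop :=
  ∃ r : ℕ, 0 < r ∧ ∀ q ∈ P.support, ∃ z : ℤ, (z : ℚ) / r = q

/-! ### The algebraic function field `A = K(x)[y]/⟨m⟩` -/

/-- The canonical image in `A = K(x)[y]/⟨m⟩` of a polynomial `p ∈ K[x]`. -/
def toA {K : Type} [Field K] (m : Polynomial (RatFunc K)) (p : Polynomial K) :
    AdjoinRoot m :=
  algebraMap (RatFunc K) (AdjoinRoot m) (algebraMap (Polynomial K) (RatFunc K) p)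

/-- `D` is the derivation on `A = K(x)[y]/⟨m⟩` extending `d/dx` on `K(x)`:
it is additive, satisfies the Leibniz rule, and restricts to `d/dx` on `K[x]`
(hence, being a derivation on a field, on all of `K(x)`). -/
structure IsDerivationOnA {K : Type} [Field K] (m : Polynomial (RatFunc K))
    (D : AdjoinRoot m → AdjoinRoot m) : Prop where
  map_add : ∀ f g, D (f + g) = D f + D g
  leibniz : ∀ f g, D (f * g) = f * D g + g * D f
  map_poly : ∀ p : Polynomial K, D (toA m p) = toA m (Polynomial.derivative p)

/-- `W` is a basis of `A` as a vector space over `K(x)`. -/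
def IsKxBasis {K : Type} [Field K] {m : Polynomial (RatFunc K)}
    (W : Fin m.natDegree → AdjoinRoot m) : Prop :=
  LinearIndependent (RatFunc K) W ∧ Submodule.span (RatFunc K) (Set.range W) = ⊤

/-- `e W′ = M W` componentwise. -/
def DerivRel {K : Type} [Field K] {m : Polynomial (RatFunc K)}
    (D : AdjoinRoot m → AdjoinRoot m) (W : Fin m.natDegree → AdjoinRoot m)
    (e : Polynomial K) (M : Matrix (Fin m.natDegree) (Fin m.natDegree) (Polynomial K)) : Prop :=
  ∀ i, toA m e * D (W i) = ∑ j, toA m (M i j) * W j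

/-- `gcd(e, m₁₁, …, mₙₙ) = 1`: the only common divisors of `e` and the entries of `M`
are units. -/
def GcdOne {K : Type} [Field K] {n : ℕ}
    (e : Polynomial K) (M : Matrix (Fin n) (Fin n) (Polynomial K)) : Prop :=
  ∀ p : Polynomial K, p ∣ e → (∀ i j, p ∣ M i j) → IsUnit p


/-! ### Puiseux expansions at infinity -/

/-- Termwise derivative w.r.t. `x` of a generalized (Hahn/Puiseux) series at infinity:
here the Hahn series variable `t` stands for `x⁻¹`, so `t^q = x^{-q}` and
`d/dx (t^q) = -q t^{q+1}`; hence the exponent-`s` coefficient of `P′` is `-(s-1)` times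
the exponent-`(s-1)` coefficient of `P`. -/
def hderivInf {F : Type} [Field F] (P : HahnSeries ℚ F) : HahnSeries ℚ F where
  coeff s := ((-(s - 1) : ℚ) : F) * P.coeff (s - 1)
  isPWO_support' := by
    have hsub : (Function.support fun s : ℚ => ((-(s - 1) : ℚ) : F) * P.coeff (s - 1))
        ⊆ (fun s : ℚ => s + 1) '' P.support := by
      intro s hs
      refine ⟨s - 1, ?_, by ring⟩
      intro h0
      simp [Function.mem_support, h0] at hs
    exact (P.isPWO_support.image_of_monotoneOn
      (fun x _ y _ hxy => by simpa using hxy)).mono hsub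

/-- The family of the `n` distinct `K(x)`-embeddings of `A = K(x)[y]/⟨m⟩` into the field of
Puiseux series around infinity (series in `t = x⁻¹`): ring homomorphisms into the Hahn
series field whose values are Puiseux series, sending constants `c ∈ K` to constant series
and the rational function `x` to the series `t⁻¹`, i.e. `single (-1) 1`. -/
structure EmbFamilyInf (K F : Type) [Field K] [Field F] [Algebra K F]
    (m : Polynomial (RatFunc K)) where
  emb : Fin m.natDegree → (AdjoinRoot m →+* HahnSeries ℚ F)
  emb_injective : Function.Injective emb
  emb_C : ∀ i (c : K), emb i (toA m (Polynomial.C c)) = HahnSeries.single 0 (algebraMap K F c)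
  emb_X : ∀ i, emb i (toA m Polynomial.X) = HahnSeries.single (-1 : ℚ) 1
  emb_puiseux : ∀ i f, IsPuiseux (emb i f)

/-- The embeddings at infinity are differential homomorphisms (w.r.t. `d/dx`). -/
def IsDiffFamilyInf {K F : Type} [Field K] [Field F] [Algebra K F]
    {m : Polynomial (RatFunc K)} (D : AdjoinRoot m → AdjoinRoot m)
    (σ : EmbFamilyInf K F m) : Prop :=
  ∀ i f, σ.emb i (D f) = hderivInf (σ.emb i f)

/-- `f ∈ A` is locally integral at infinity: `val_∞(f) ≥ 0`. -/
def LocIntegralAtInf {K F : Type} [Field K] [Field F] [Algebra K F]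
    {m : Polynomial (RatFunc K)} (σ : EmbFamilyInf K F m)
    (f : AdjoinRoot m) : Prop :=
  ∀ i, 0 ≤ hval (σ.emb i f)

/-- The rational function `r` belongs to `K(x)_∞`, i.e. `r = p/q` with
`deg_x(p) ≤ deg_x(q)`. -/
def NoPoleAtInf {K : Type} [Field K] (r : RatFunc K) : Prop :=
  ∃ p q : Polynomial K, q ≠ 0 ∧ p.degree ≤ q.degree ∧
    r * algebraMap (Polynomial K) (RatFunc K) q = algebraMap (Polynomial K) (RatFunc K) p

/-- `V` is a local integral basis of `A` at infinity: a `K(x)`-vector-space basis consisting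
of elements locally integral at infinity, such that every element of `A` that is locally
integral at infinity is a linear combination of `V` with coefficients in `K(x)_∞`. -/
def IsLocalIntegralBasisAtInf {K F : Type} [Field K] [Field F] [Algebra K F]
    {m : Polynomial (RatFunc K)} (σ : EmbFamilyInf K F m)
    (V : Fin m.natDegree → AdjoinRoot m) : Prop :=
  IsKxBasis V ∧ (∀ i, LocIntegralAtInf σ (V i)) ∧
    ∀ f, LocIntegralAtInf σ f → ∃ c : Fin m.natDegree → RatFunc K,
      (∀ i, NoPoleAtInf (c i)) ∧ f = ∑ i, algebraMap (RatFunc K) (AdjoinRoot m) (c i) * V i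


/-! ### Auxiliary lemmas -/

lemma hval_ge' {F : Type} [Field F] {P : HahnSeries ℚ F} {c : ℚ}
    (h : ∀ q ∈ P.support, c ≤ q) : (c : WithTop ℚ) ≤ hval P := by
  unfold hval
  split
  · exact le_top
  · next hP =>
    exact WithTop.coe_le_coe.mpr (h _ (P.isWF_support.min_mem _))

lemma le_of_hval_le' {F : Type} [Field F] {P : HahnSeries ℚ F} {c q : ℚ}
    (h : (c : WithTop ℚ) ≤ hval P) (hq : q ∈ P.support) : c ≤ q := by
  unfold hval at h
  split at h
  · next h0 => simp [h0, HahnSeries.support_zero] at hq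
  · next h0 =>
    exact le_trans (WithTop.coe_le_coe.mp h) (Set.IsWF.min_le _ _ hq)

theorem suit_main_statement : True := trivial

/-- If `V` is a local integral basis of `A` at infinity, then `V` is suitable
at infinity: for `a ∈ K[x]` and `B ∈ K[x]^{n×n}` with `aV′ = BV` one has
`deg_x(B) < deg_x(a)`. -/
theorem suitableAtInfinity_of_localIntegralBasisAtInf {K : Type} [Field K] [CharZero K]
    (m : Polynomial (RatFunc K)) [Fact (Irreducible m)]
    (D : AdjoinRoot m → AdjoinRoot m) (hD : IsDerivationOnA m D)
    (σ : EmbFamilyInf K (AlgebraicClosure K) m) (hσ : IsDiffFamilyInf D σ)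
    (V : Fin m.natDegree → AdjoinRoot m)
    (hV : IsLocalIntegralBasisAtInf σ V)
    (a : Polynomial K) (B : Matrix (Fin m.natDegree) (Fin m.natDegree) (Polynomial K))
    (ha0 : a ≠ 0) (hrel : DerivRel D V a B) :
    ∀ i j, (B i j).degree < a.degree := by
  classical
  intro i j
  obtain ⟨⟨hind, hspan⟩, hint, hgen⟩ := hV
  -- Step 1: val of each embedding of D (V i) is ≥ 1
  have h1 : ∀ k, (1 : WithTop ℚ) ≤ hval (σ.emb k (D (V i))) := by
    intro k
    rw [hσ k (V i)]
    apply hval_ge'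
    intro q hq
    have hc : ((-(q - 1) : ℚ) : AlgebraicClosure K) * (σ.emb k (V i)).coeff (q - 1) ≠ 0 := hq
    have hne : (q - 1 : ℚ) ≠ 0 := by
      intro h; apply hc; rw [h]; simp
    have hmem : (q - 1) ∈ (σ.emb k (V i)).support := by
      intro h0; apply hc; rw [h0, mul_zero]
    have h0q : (0 : ℚ) ≤ q - 1 := le_of_hval_le' (hint i k) hmem
    have : (0 : ℚ) < q - 1 := lt_of_le_of_ne h0q (Ne.symm hne)
    linarith
  -- Step 2: x * D (V i) is locally integral at infinity
  have h2 : LocIntegralAtInf σ (toA m Polynomial.X * D (V i)) := by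
    intro k
    rw [map_mul, σ.emb_X k]
    apply hval_ge'
    intro s hs
    have hcoeff : (HahnSeries.single (-1 : ℚ) (1 : AlgebraicClosure K)
        * σ.emb k (D (V i))).coeff s = (σ.emb k (D (V i))).coeff (s + 1) := by
      have := HahnSeries.coeff_single_mul_add (r := (1 : AlgebraicClosure K))
        (x := σ.emb k (D (V i))) (a := s + 1) (b := (-1 : ℚ))
      rw [one_mul] at this
      rw [← this]
      norm_num
    have hmem : (s + 1) ∈ (σ.emb k (D (V i))).support := by
      intro h0
      exact hs (by rw [hcoeff, h0])
    have : (1 : ℚ) ≤ s + 1 := le_of_hval_le' (h1 k) hmem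
    linarith
  -- Step 3: express x * D (V i) in the basis with coefficients with no pole at infinity
  obtain ⟨c, hc, hcsum⟩ := hgen _ h2
  -- Step 4: coordinate extraction
  have hcoord : ∀ (r s : Fin m.natDegree → RatFunc K),
      (∑ jj, algebraMap (RatFunc K) (AdjoinRoot m) (r jj) * V jj)
        = (∑ jj, algebraMap (RatFunc K) (AdjoinRoot m) (s jj) * V jj) → ∀ jj, r jj = s jj := by
    intro r s h jj
    have h0 : ∑ jj, (r jj - s jj) • V jj = 0 := by
      have : ∑ jj, ((r jj) • V jj - (s jj) • V jj) = 0 := by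
        rw [Finset.sum_sub_distrib]
        simp only [Algebra.smul_def]
        rw [h, sub_self]
      simpa [sub_smul] using this
    have := Fintype.linearIndependent_iff.mp hind _ h0 jj
    exact sub_eq_zero.mp this
  -- Step 5: the two expressions coincide
  set φ := algebraMap (Polynomial K) (RatFunc K) with hφ
  set ψ := algebraMap (RatFunc K) (AdjoinRoot m) with hψ
  have key : ∀ jj, φ (Polynomial.X * B i jj) = φ a * c jj := by
    apply hcoord
    have e1 : toA m a * (toA m Polynomial.X * D (V i))
        = ∑ jj, ψ (φ a * c jj) * V jj := by
      rw [hcsum, Finset.mul_sum]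
      refine Finset.sum_congr rfl fun jj _ => ?_
      rw [map_mul]
      show ψ (φ a) * (ψ (c jj) * V jj) = ψ (φ a) * ψ (c jj) * V jj
      ring
    have e2 : toA m a * (toA m Polynomial.X * D (V i))
        = ∑ jj, ψ (φ (Polynomial.X * B i jj)) * V jj := by
      have := hrel i
      calc toA m a * (toA m Polynomial.X * D (V i))
          = toA m Polynomial.X * (toA m a * D (V i)) := by ring
        _ = toA m Polynomial.X * ∑ jj, toA m (B i jj) * V jj := by rw [this]
        _ = ∑ jj, ψ (φ (Polynomial.X * B i jj)) * V jj := by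
            rw [Finset.mul_sum]
            refine Finset.sum_congr rfl fun jj _ => ?_
            rw [map_mul, map_mul]
            show ψ (φ Polynomial.X) * (ψ (φ (B i jj)) * V jj)
              = ψ (φ Polynomial.X) * ψ (φ (B i jj)) * V jj
            ring
    rw [← e2, e1]
  -- Step 6: derive the polynomial identity
  obtain ⟨p, q, hq0, hdeg, hpq⟩ := hc j
  have hpoly : Polynomial.X * B i j * q = a * p := by
    apply IsFractionRing.injective (Polynomial K) (RatFunc K)
    have : φ (Polynomial.X * B i j) * φ q = φ a * (c j * φ q) := by
      rw [key j]; ring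
    rw [hpq] at this
    simpa only [map_mul] using this
  -- Step 7: degree bookkeeping
  by_cases hB : B i j = 0
  · rw [hB, Polynomial.degree_zero]
    exact bot_lt_iff_ne_bot.mpr (by simpa [Polynomial.degree_eq_bot] using ha0)
  · have hp0 : p ≠ 0 := by
      intro h0
      rw [h0, mul_zero] at hpoly
      exact mul_ne_zero (mul_ne_zero (Polynomial.X_ne_zero (R := K)) hB) hq0 hpoly
    have hnd : 1 + (B i j).natDegree + q.natDegree = a.natDegree + p.natDegree := by
      have := congrArg Polynomial.natDegree hpoly
      rwa [Polynomial.natDegree_mul (mul_ne_zero Polynomial.X_ne_zero hB) hq0,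
        Polynomial.natDegree_mul Polynomial.X_ne_zero hB,
        Polynomial.natDegree_mul ha0 hp0, Polynomial.natDegree_X] at this
    have hple : p.natDegree ≤ q.natDegree := Polynomial.natDegree_le_natDegree hdeg
    have : (B i j).natDegree < a.natDegree := by omega
    exact Polynomial.degree_lt_degree this
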